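/- Let n ≥ 1, fix σ_x, σ_t > 0, and let X : [0, L₁] → ℝⁿ and Y : [0, L₂] → ℝⁿ be C¹ regular curves (‖X'(s)‖ > 0 and ‖Y'(t)‖ > 0 for all s, t). For a C¹ map φ : ℝⁿ → ℝⁿ, let φ.Y denote the curve t ↦ φ(Y(t)). Then the squared varifold distance is continuous at the identity with respect to C¹-small perturbations: for every ε > 0 there exists δ > 0 such that for every C¹ map φ : ℝⁿ → ℝⁿ with sup_{x ∈ ℝⁿ} ‖φ(x) − x‖ < δ and sup_{x ∈ ℝⁿ} ‖Dφ(x) − I‖ < δ (operator/Frobenius norm), one has |d²(X, φ.Y) − d²(X, Y)| < ε, where for δ < 1 the curve φ.Y is again regular since ‖(φ∘Y)'(t)‖ = ‖Dφ(Y(t))·Y'(t)‖ ≥ (1 − δ)‖Y'(t)‖ > 0. -/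

import Mathlib

open Set MeasureTheory

/-- The parameterization-invariant Gaussian oriented-varifold inner product of two C¹ regular
curves `α : [0, L₁] → ℝⁿ` and `β : [0, L₂] → ℝⁿ`, given together with their derivative fields
`α'`, `β'` (the unit tangent being `α'/‖α'‖`) and kernel widths `σx`, `σt`. -/
noncomputable def vfInnerR {n : ℕ} (σx σt L₁ L₂ : ℝ)
    (α α' β β' : ℝ → EuclideanSpace ℝ (Fin n)) : ℝ :=
  ∫ s in (0:ℝ)..L₁, ∫ t in (0:ℝ)..L₂,
    Real.exp (-‖α s - β t‖ ^ 2 / σx ^ 2) *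
      Real.exp (-‖‖α' s‖⁻¹ • α' s - ‖β' t‖⁻¹ • β' t‖ ^ 2 / σt ^ 2) * (‖α' s‖ * ‖β' t‖)

/-- The squared varifold distance `d²(α, β) = ‖μ_α‖² − 2⟨μ_α, μ_β⟩ + ‖μ_β‖²`. -/
noncomputable def vfDistSq {n : ℕ} (σx σt L₁ L₂ : ℝ)
    (α α' β β' : ℝ → EuclideanSpace ℝ (Fin n)) : ℝ :=
  vfInnerR σx σt L₁ L₁ α α' α α' - 2 * vfInnerR σx σt L₁ L₂ α α' β β'
    + vfInnerR σx σt L₂ L₂ β β' β β'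


/-- kernel function -/
noncomputable def kerF {n : ℕ} (σx σt : ℝ) (a u p v : EuclideanSpace ℝ (Fin n)) : ℝ :=
  Real.exp (-‖a - p‖ ^ 2 / σx ^ 2) *
    Real.exp (-‖‖u‖⁻¹ • u - ‖v‖⁻¹ • v‖ ^ 2 / σt ^ 2) * (‖u‖ * ‖v‖)

lemma abs_exp_neg_sub_exp_neg {x y : ℝ} (hx : 0 ≤ x) (hy : 0 ≤ y) :
    |Real.exp (-x) - Real.exp (-y)| ≤ |x - y| := by
  wlog h : y ≤ x generalizing x y
  · rw [abs_sub_comm, abs_sub_comm x y]; exact this hy hx (le_of_not_ge h)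
  have h1 : Real.exp (-x) ≤ Real.exp (-y) := Real.exp_le_exp.2 (by linarith)
  rw [abs_of_nonpos (by linarith), abs_of_nonneg (by linarith)]
  have h2 : Real.exp (-y) * Real.exp (y - x) = Real.exp (-x) := by
    rw [← Real.exp_add]; ring_nf
  have h3 : (y - x) + 1 ≤ Real.exp (y - x) := Real.add_one_le_exp _
  have h4 : Real.exp (-y) ≤ 1 := Real.exp_le_one_iff.2 (by linarith)
  have h5 : 0 < Real.exp (-y) := Real.exp_pos _
  nlinarith [Real.exp_pos (y - x)]

lemma abs_sq_sub_sq {x y d : ℝ} (hx : 0 ≤ x) (hy : 0 ≤ y) (h : |x - y| ≤ d) :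
    |x ^ 2 - y ^ 2| ≤ (x + y) * d := by
  have : x ^ 2 - y ^ 2 = (x + y) * (x - y) := by ring
  rw [this, abs_mul, abs_of_nonneg (by positivity)]
  exact mul_le_mul_of_nonneg_left h (by positivity)

lemma unit_sub {n : ℕ} {x y : EuclideanSpace ℝ (Fin n)} (hx : x ≠ 0) (hy : y ≠ 0) :
    ‖‖x‖⁻¹ • x - ‖y‖⁻¹ • y‖ ≤ 2 * ‖x - y‖ / ‖x‖ := by
  have hxn : (0:ℝ) < ‖x‖ := norm_pos_iff.2 hx
  have hyn : (0:ℝ) < ‖y‖ := norm_pos_iff.2 hy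
  have key : ‖x‖⁻¹ • x - ‖y‖⁻¹ • y = ‖x‖⁻¹ • (x - y) + (‖x‖⁻¹ - ‖y‖⁻¹) • y := by
    rw [smul_sub, sub_smul]; abel
  rw [key]
  have h1 : ‖‖x‖⁻¹ • (x - y)‖ = ‖x - y‖ / ‖x‖ := by
    rw [norm_smul, norm_inv, norm_norm]; rw [div_eq_inv_mul]
  have h2 : ‖(‖x‖⁻¹ - ‖y‖⁻¹) • y‖ ≤ ‖x - y‖ / ‖x‖ := by
    rw [norm_smul, Real.norm_eq_abs]
    have he : ‖x‖⁻¹ - ‖y‖⁻¹ = (‖y‖ - ‖x‖) / (‖x‖ * ‖y‖) := by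
      field_simp
    rw [he, abs_div, abs_of_nonneg (by positivity : (0:ℝ) ≤ ‖x‖ * ‖y‖)]
    have h3 : |‖y‖ - ‖x‖| ≤ ‖x - y‖ := by
      rw [abs_sub_comm]; exact abs_norm_sub_norm_le x y
    calc |‖y‖ - ‖x‖| / (‖x‖ * ‖y‖) * ‖y‖ = |‖y‖ - ‖x‖| / ‖x‖ := by
          field_simp
      _ ≤ ‖x - y‖ / ‖x‖ := by gcongr
  calc ‖‖x‖⁻¹ • (x - y) + (‖x‖⁻¹ - ‖y‖⁻¹) • y‖
      ≤ ‖‖x‖⁻¹ • (x - y)‖ + ‖(‖x‖⁻¹ - ‖y‖⁻¹) • y‖ := norm_add_le _ _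
    _ ≤ ‖x - y‖ / ‖x‖ + ‖x - y‖ / ‖x‖ := by rw [h1]; linarith
    _ = 2 * ‖x - y‖ / ‖x‖ := by ring

lemma triple_prod_diff {A B c A₂ B₂ c₂ e1 e2 e3 K : ℝ}
    (hA2 : 0 ≤ A₂) (hA2' : A₂ ≤ 1) (hB : 0 ≤ B) (hB' : B ≤ 1)
    (hB2 : 0 ≤ B₂) (hB2' : B₂ ≤ 1) (hc : 0 ≤ c) (hcK : c ≤ K)
    (h1 : |A - A₂| ≤ e1) (h2 : |B - B₂| ≤ e2) (h3 : |c - c₂| ≤ e3) :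
    |A * B * c - A₂ * B₂ * c₂| ≤ e1 * K + e2 * K + e3 := by
  have key : A * B * c - A₂ * B₂ * c₂
      = (A - A₂) * (B * c) + A₂ * ((B - B₂) * c) + (A₂ * B₂) * (c - c₂) := by ring
  have hK : 0 ≤ K := hc.trans hcK
  have t1 : |(A - A₂) * (B * c)| ≤ e1 * K := by
    rw [abs_mul, abs_of_nonneg (mul_nonneg hB hc)]
    exact mul_le_mul h1 (by nlinarith) (by positivity) ((abs_nonneg _).trans h1)
  have t2 : |A₂ * ((B - B₂) * c)| ≤ e2 * K := by
    rw [abs_mul, abs_mul, abs_of_nonneg hA2, abs_of_nonneg hc]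
    calc A₂ * (|B - B₂| * c) ≤ 1 * (e2 * K) := by
          apply mul_le_mul hA2' (mul_le_mul h2 hcK hc ((abs_nonneg _).trans h2))
            (by positivity) zero_le_one
      _ = e2 * K := one_mul _
  have t3 : |(A₂ * B₂) * (c - c₂)| ≤ e3 := by
    rw [abs_mul, abs_of_nonneg (mul_nonneg hA2 hB2)]
    calc A₂ * B₂ * |c - c₂| ≤ 1 * |c - c₂| := by
          apply mul_le_mul_of_nonneg_right (by nlinarith) (abs_nonneg _)
      _ ≤ e3 := by rw [one_mul]; exact h3
  calc |A * B * c - A₂ * B₂ * c₂|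
      ≤ |(A - A₂) * (B * c)| + |A₂ * ((B - B₂) * c)| + |(A₂ * B₂) * (c - c₂)| := by
        rw [key]; exact abs_add_three _ _ _
    _ ≤ e1 * K + e2 * K + e3 := by linarith

lemma kerF_diff {n : ℕ} {σx σt M C m d : ℝ} (hσx : 0 < σx) (hσt : 0 < σt) (hm : 0 < m)
    {a a₂ u u₂ p p₂ v v₂ : EuclideanSpace ℝ (Fin n)}
    (hMa : ‖a - p‖ ≤ M) (hMa2 : ‖a₂ - p₂‖ ≤ M)
    (hmu : m ≤ ‖u‖) (hmv : m ≤ ‖v‖) (hu2 : u₂ ≠ 0) (hv2 : v₂ ≠ 0)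
    (hCu : ‖u‖ ≤ C) (hCu2 : ‖u₂‖ ≤ C) (hCv : ‖v‖ ≤ C) (hCv2 : ‖v₂‖ ≤ C)
    (hda : ‖a - a₂‖ ≤ d) (hdp : ‖p - p₂‖ ≤ d) (hdu : ‖u - u₂‖ ≤ d) (hdv : ‖v - v₂‖ ≤ d) :
    |kerF σx σt a u p v - kerF σx σt a₂ u₂ p₂ v₂| ≤
      ((4 * M / σx ^ 2 + 16 / (m * σt ^ 2)) * (C * C) + 2 * C) * d := by
  have hd : 0 ≤ d := (norm_nonneg _).trans hda
  have hM : 0 ≤ M := (norm_nonneg _).trans hMa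
  have hC : 0 < C := hm.trans_le (hmu.trans hCu)
  have hu : u ≠ 0 := norm_pos_iff.1 (hm.trans_le hmu)
  have hv : v ≠ 0 := norm_pos_iff.1 (hm.trans_le hmv)
  -- unit vectors
  set uh := ‖u‖⁻¹ • u with huh
  set vh := ‖v‖⁻¹ • v with hvh
  set uh2 := ‖u₂‖⁻¹ • u₂ with huh2
  set vh2 := ‖v₂‖⁻¹ • v₂ with hvh2
  have nuh : ‖uh‖ = 1 := by
    rw [huh, norm_smul, norm_inv, norm_norm, inv_mul_cancel₀ (norm_ne_zero_iff.2 hu)]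
  have nvh : ‖vh‖ = 1 := by
    rw [hvh, norm_smul, norm_inv, norm_norm, inv_mul_cancel₀ (norm_ne_zero_iff.2 hv)]
  have nuh2 : ‖uh2‖ = 1 := by
    rw [huh2, norm_smul, norm_inv, norm_norm, inv_mul_cancel₀ (norm_ne_zero_iff.2 hu2)]
  have nvh2 : ‖vh2‖ = 1 := by
    rw [hvh2, norm_smul, norm_inv, norm_norm, inv_mul_cancel₀ (norm_ne_zero_iff.2 hv2)]
  -- A-estimate
  have hA : |Real.exp (-‖a - p‖ ^ 2 / σx ^ 2) - Real.exp (-‖a₂ - p₂‖ ^ 2 / σx ^ 2)|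
      ≤ 4 * M / σx ^ 2 * d := by
    rw [neg_div, neg_div]
    refine (abs_exp_neg_sub_exp_neg (by positivity) (by positivity)).trans ?_
    rw [← sub_div, abs_div, abs_of_nonneg (by positivity : (0:ℝ) ≤ σx ^ 2)]
    rw [div_le_iff₀ (by positivity)]
    have h2 : ‖(a - p) - (a₂ - p₂)‖ ≤ 2 * d := by
      have he : (a - p) - (a₂ - p₂) = (a - a₂) - (p - p₂) := by abel
      rw [he]; exact (norm_sub_le _ _).trans (by linarith)
    have h3 : |‖a - p‖ - ‖a₂ - p₂‖| ≤ 2 * d := (abs_norm_sub_norm_le _ _).trans h2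
    have h4 := abs_sq_sub_sq (norm_nonneg (a - p)) (norm_nonneg (a₂ - p₂)) h3
    calc |‖a - p‖ ^ 2 - ‖a₂ - p₂‖ ^ 2| ≤ (‖a - p‖ + ‖a₂ - p₂‖) * (2 * d) := h4
      _ ≤ (2 * M) * (2 * d) := by
          apply mul_le_mul_of_nonneg_right (by linarith) (by positivity)
      _ = 4 * M / σx ^ 2 * d * σx ^ 2 := by field_simp; ring
  -- B-estimate
  have huu : ‖uh - uh2‖ ≤ 2 * d / m := by
    refine (unit_sub hu hu2).trans ?_
    apply div_le_div₀ (by positivity) (by linarith) hm hmu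
  have hvv : ‖vh - vh2‖ ≤ 2 * d / m := by
    refine (unit_sub hv hv2).trans ?_
    apply div_le_div₀ (by positivity) (by linarith) hm hmv
  have hB : |Real.exp (-‖uh - vh‖ ^ 2 / σt ^ 2) - Real.exp (-‖uh2 - vh2‖ ^ 2 / σt ^ 2)|
      ≤ 16 / (m * σt ^ 2) * d := by
    rw [neg_div, neg_div]
    refine (abs_exp_neg_sub_exp_neg (by positivity) (by positivity)).trans ?_
    rw [← sub_div, abs_div, abs_of_nonneg (by positivity : (0:ℝ) ≤ σt ^ 2)]
    rw [div_le_iff₀ (by positivity)]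
    have h2 : ‖(uh - vh) - (uh2 - vh2)‖ ≤ 4 * d / m := by
      have he : (uh - vh) - (uh2 - vh2) = (uh - uh2) - (vh - vh2) := by abel
      rw [he]
      refine (norm_sub_le _ _).trans ?_
      calc ‖uh - uh2‖ + ‖vh - vh2‖ ≤ 2 * d / m + 2 * d / m := by linarith
        _ = 4 * d / m := by ring
    have h3 : |‖uh - vh‖ - ‖uh2 - vh2‖| ≤ 4 * d / m := (abs_norm_sub_norm_le _ _).trans h2
    have h4 := abs_sq_sub_sq (norm_nonneg (uh - vh)) (norm_nonneg (uh2 - vh2)) h3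
    have h5 : ‖uh - vh‖ ≤ 2 := by
      refine (norm_sub_le _ _).trans ?_; rw [nuh, nvh]; norm_num
    have h6 : ‖uh2 - vh2‖ ≤ 2 := by
      refine (norm_sub_le _ _).trans ?_; rw [nuh2, nvh2]; norm_num
    calc |‖uh - vh‖ ^ 2 - ‖uh2 - vh2‖ ^ 2| ≤ (‖uh - vh‖ + ‖uh2 - vh2‖) * (4 * d / m) := h4
      _ ≤ 4 * (4 * d / m) := by
          apply mul_le_mul_of_nonneg_right (by linarith) (by positivity)
      _ = 16 / (m * σt ^ 2) * d * σt ^ 2 := by field_simp; ring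
  -- c-estimate
  have hcc : |‖u‖ * ‖v‖ - ‖u₂‖ * ‖v₂‖| ≤ 2 * C * d := by
    have he : ‖u‖ * ‖v‖ - ‖u₂‖ * ‖v₂‖
        = (‖u‖ - ‖u₂‖) * ‖v‖ + ‖u₂‖ * (‖v‖ - ‖v₂‖) := by ring
    rw [he]
    refine (abs_add_le _ _).trans ?_
    rw [abs_mul, abs_mul, abs_of_nonneg (norm_nonneg v), abs_of_nonneg (norm_nonneg u₂)]
    have e1 : |‖u‖ - ‖u₂‖| ≤ d := (abs_norm_sub_norm_le _ _).trans hdu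
    have e2 : |‖v‖ - ‖v₂‖| ≤ d := (abs_norm_sub_norm_le _ _).trans hdv
    have : |‖u‖ - ‖u₂‖| * ‖v‖ ≤ d * C :=
      mul_le_mul e1 hCv (norm_nonneg _) hd
    have : ‖u₂‖ * |‖v‖ - ‖v₂‖| ≤ C * d :=
      mul_le_mul hCu2 e2 (abs_nonneg _) hC.le
    linarith
  -- combine
  have expA2 : (0:ℝ) ≤ Real.exp (-‖a₂ - p₂‖ ^ 2 / σx ^ 2) := (Real.exp_pos _).le
  have expA2' : Real.exp (-‖a₂ - p₂‖ ^ 2 / σx ^ 2) ≤ 1 :=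
    Real.exp_le_one_iff.2 (by rw [neg_div]; exact neg_nonpos.2 (by positivity))
  have expB : (0:ℝ) ≤ Real.exp (-‖uh - vh‖ ^ 2 / σt ^ 2) := (Real.exp_pos _).le
  have expB' : Real.exp (-‖uh - vh‖ ^ 2 / σt ^ 2) ≤ 1 :=
    Real.exp_le_one_iff.2 (by rw [neg_div]; exact neg_nonpos.2 (by positivity))
  have expB2 : (0:ℝ) ≤ Real.exp (-‖uh2 - vh2‖ ^ 2 / σt ^ 2) := (Real.exp_pos _).le
  have expB2' : Real.exp (-‖uh2 - vh2‖ ^ 2 / σt ^ 2) ≤ 1 :=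
    Real.exp_le_one_iff.2 (by rw [neg_div]; exact neg_nonpos.2 (by positivity))
  have hcK : ‖u‖ * ‖v‖ ≤ C * C := mul_le_mul hCu hCv (norm_nonneg _) hC.le
  have main := triple_prod_diff expA2 expA2' expB expB' expB2 expB2'
    (mul_nonneg (norm_nonneg u) (norm_nonneg v)) hcK hA hB hcc
  show |Real.exp (-‖a - p‖ ^ 2 / σx ^ 2) * Real.exp (-‖uh - vh‖ ^ 2 / σt ^ 2) * (‖u‖ * ‖v‖)
      - Real.exp (-‖a₂ - p₂‖ ^ 2 / σx ^ 2) * Real.exp (-‖uh2 - vh2‖ ^ 2 / σt ^ 2)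
        * (‖u₂‖ * ‖v₂‖)| ≤ ((4 * M / σx ^ 2 + 16 / (m * σt ^ 2)) * (C * C) + 2 * C) * d
  calc _ ≤ 4 * M / σx ^ 2 * d * (C * C) + 16 / (m * σt ^ 2) * d * (C * C) + 2 * C * d := main
    _ = ((4 * M / σx ^ 2 + 16 / (m * σt ^ 2)) * (C * C) + 2 * C) * d := by ring

lemma vfInnerR_congr {n : ℕ} {σx σt L₁ L₂ : ℝ} (h1 : 0 ≤ L₁) (h2 : 0 ≤ L₂)
    {α α' β β' αe αe' βe βe' : ℝ → EuclideanSpace ℝ (Fin n)}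
    (ha : EqOn α αe (Icc 0 L₁)) (ha' : EqOn α' αe' (Icc 0 L₁))
    (hb : EqOn β βe (Icc 0 L₂)) (hb' : EqOn β' βe' (Icc 0 L₂)) :
    vfInnerR σx σt L₁ L₂ α α' β β' = vfInnerR σx σt L₁ L₂ αe αe' βe βe' := by
  unfold vfInnerR
  apply intervalIntegral.integral_congr
  intro s hs
  rw [uIcc_of_le h1] at hs
  apply intervalIntegral.integral_congr
  intro t ht
  rw [uIcc_of_le h2] at ht
  simp only [ha hs, ha' hs, hb ht, hb' ht]

lemma kerF_continuous {n : ℕ} (σx σt : ℝ) {α α' β β' : ℝ → EuclideanSpace ℝ (Fin n)}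
    (hα : Continuous α) (hα' : Continuous α') (hβ : Continuous β) (hβ' : Continuous β')
    (h1 : ∀ s, α' s ≠ 0) (h2 : ∀ t, β' t ≠ 0) :
    Continuous fun p : ℝ × ℝ => kerF σx σt (α p.1) (α' p.1) (β p.2) (β' p.2) := by
  unfold kerF
  have hu : Continuous fun p : ℝ × ℝ => α' p.1 := hα'.comp continuous_fst
  have hv : Continuous fun p : ℝ × ℝ => β' p.2 := hβ'.comp continuous_snd
  have huh : Continuous fun p : ℝ × ℝ => ‖α' p.1‖⁻¹ • α' p.1 :=
    (hu.norm.inv₀ fun p => norm_ne_zero_iff.2 (h1 p.1)).smul hu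
  have hvh : Continuous fun p : ℝ × ℝ => ‖β' p.2‖⁻¹ • β' p.2 :=
    (hv.norm.inv₀ fun p => norm_ne_zero_iff.2 (h2 p.2)).smul hv
  have e1 : Continuous fun p : ℝ × ℝ =>
      Real.exp (-‖α p.1 - β p.2‖ ^ 2 / σx ^ 2) :=
    Real.continuous_exp.comp
      ((((hα.comp continuous_fst).sub (hβ.comp continuous_snd)).norm.pow 2).neg.div_const _)
  have e2 : Continuous fun p : ℝ × ℝ =>
      Real.exp (-‖‖α' p.1‖⁻¹ • α' p.1 - ‖β' p.2‖⁻¹ • β' p.2‖ ^ 2 / σt ^ 2) :=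
    Real.continuous_exp.comp (((huh.sub hvh).norm.pow 2).neg.div_const _)
  exact (e1.mul e2).mul (hu.norm.mul hv.norm)

lemma double_integral_diff_le {L₁ L₂ c : ℝ} (hL₁ : 0 ≤ L₁) (hL₂ : 0 ≤ L₂) (hc : 0 ≤ c)
    {f g : ℝ → ℝ → ℝ} (hf : Continuous fun p : ℝ × ℝ => f p.1 p.2)
    (hg : Continuous fun p : ℝ × ℝ => g p.1 p.2)
    (hfg : ∀ s ∈ Icc (0:ℝ) L₁, ∀ t ∈ Icc (0:ℝ) L₂, |f s t - g s t| ≤ c) :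
    |(∫ s in (0:ℝ)..L₁, ∫ t in (0:ℝ)..L₂, f s t)
      - ∫ s in (0:ℝ)..L₁, ∫ t in (0:ℝ)..L₂, g s t| ≤ c * L₂ * L₁ := by
  have hF : Continuous fun s => ∫ t in (0:ℝ)..L₂, f s t :=
    intervalIntegral.continuous_parametric_intervalIntegral_of_continuous' hf 0 L₂
  have hG : Continuous fun s => ∫ t in (0:ℝ)..L₂, g s t :=
    intervalIntegral.continuous_parametric_intervalIntegral_of_continuous' hg 0 L₂
  rw [← intervalIntegral.integral_sub (hF.intervalIntegrable 0 L₁)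
    (hG.intervalIntegrable 0 L₁)]
  have key : ∀ s ∈ Set.uIoc (0:ℝ) L₁,
      ‖(∫ t in (0:ℝ)..L₂, f s t) - ∫ t in (0:ℝ)..L₂, g s t‖ ≤ c * L₂ := by
    intro s hs
    rw [uIoc_of_le hL₁] at hs
    have hsIcc : s ∈ Icc (0:ℝ) L₁ := Ioc_subset_Icc_self hs
    have hfs : Continuous fun t => f s t := hf.comp (continuous_const.prodMk continuous_id)
    have hgs : Continuous fun t => g s t := hg.comp (continuous_const.prodMk continuous_id)
    rw [← intervalIntegral.integral_sub (hfs.intervalIntegrable 0 L₂)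
      (hgs.intervalIntegrable 0 L₂)]
    have := intervalIntegral.norm_integral_le_of_norm_le_const
      (f := fun t => f s t - g s t) (C := c) (a := 0) (b := L₂) ?_
    · calc ‖∫ t in (0:ℝ)..L₂, (f s t - g s t)‖ ≤ c * |L₂ - 0| := this
        _ = c * L₂ := by rw [sub_zero, abs_of_nonneg hL₂]
    · intro t ht
      rw [uIoc_of_le hL₂] at ht
      exact (hfg s hsIcc t (Ioc_subset_Icc_self ht))
  have := intervalIntegral.norm_integral_le_of_norm_le_const key
  calc |∫ s in (0:ℝ)..L₁, ((∫ t in (0:ℝ)..L₂, f s t) - ∫ t in (0:ℝ)..L₂, g s t)|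
      ≤ c * L₂ * |L₁ - 0| := this
    _ = c * L₂ * L₁ := by rw [sub_zero, abs_of_nonneg hL₁]

lemma vfInnerR_diff_le {n : ℕ} {σx σt L₁ L₂ c : ℝ} (hL₁ : 0 ≤ L₁) (hL₂ : 0 ≤ L₂) (hc : 0 ≤ c)
    {α α' β β' α₂ α₂' β₂ β₂' : ℝ → EuclideanSpace ℝ (Fin n)}
    (hα : Continuous α) (hα' : Continuous α') (hβ : Continuous β) (hβ' : Continuous β')
    (hα₂ : Continuous α₂) (hα₂' : Continuous α₂') (hβ₂ : Continuous β₂) (hβ₂' : Continuous β₂')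
    (hn1 : ∀ s, α' s ≠ 0) (hn2 : ∀ t, β' t ≠ 0) (hn3 : ∀ s, α₂' s ≠ 0) (hn4 : ∀ t, β₂' t ≠ 0)
    (hk : ∀ s ∈ Icc (0:ℝ) L₁, ∀ t ∈ Icc (0:ℝ) L₂,
      |kerF σx σt (α s) (α' s) (β t) (β' t) - kerF σx σt (α₂ s) (α₂' s) (β₂ t) (β₂' t)| ≤ c) :
    |vfInnerR σx σt L₁ L₂ α α' β β' - vfInnerR σx σt L₁ L₂ α₂ α₂' β₂ β₂'| ≤ c * L₂ * L₁ :=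
  double_integral_diff_le hL₁ hL₂ hc
    (kerF_continuous σx σt hα hα' hβ hβ' hn1 hn2)
    (kerF_continuous σx σt hα₂ hα₂' hβ₂ hβ₂' hn3 hn4) hk

set_option maxHeartbeats 2000000 in
/-- Robustness of the squared varifold distance to small diffeomorphic deformations:
`d²(X, φ.Y) → d²(X, Y)` as `‖φ − id‖_∞ → 0` and `‖Dφ − I‖_∞ → 0`, for C¹ regular curves
`X`, `Y` and C¹ maps `φ : ℝⁿ → ℝⁿ`. -/
theorem vfDistSq_robust_to_small_deformations
    {n : ℕ} (hn : 1 ≤ n) (σx σt : ℝ) (hσx : 0 < σx) (hσt : 0 < σt)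
    (L₁ L₂ : ℝ) (hL₁ : 0 < L₁) (hL₂ : 0 < L₂)
    (X X' Y Y' : ℝ → EuclideanSpace ℝ (Fin n))
    (hXderiv : ∀ s ∈ Icc (0:ℝ) L₁, HasDerivWithinAt X (X' s) (Icc 0 L₁) s)
    (hYderiv : ∀ t ∈ Icc (0:ℝ) L₂, HasDerivWithinAt Y (Y' t) (Icc 0 L₂) t)
    (hXcont : ContinuousOn X' (Icc 0 L₁))
    (hYcont : ContinuousOn Y' (Icc 0 L₂))
    (hXreg : ∀ s ∈ Icc (0:ℝ) L₁, 0 < ‖X' s‖)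
    (hYreg : ∀ t ∈ Icc (0:ℝ) L₂, 0 < ‖Y' t‖) :
    ∀ ε : ℝ, 0 < ε → ∃ δ : ℝ, 0 < δ ∧ δ < 1 ∧
      ∀ φ : EuclideanSpace ℝ (Fin n) → EuclideanSpace ℝ (Fin n), ContDiff ℝ 1 φ →
        (∀ x, ‖φ x - x‖ < δ) →
        (∀ x, ‖fderiv ℝ φ x - ContinuousLinearMap.id ℝ (EuclideanSpace ℝ (Fin n))‖ < δ) →
        |vfDistSq σx σt L₁ L₂ X X' (fun t => φ (Y t)) (fun t => fderiv ℝ φ (Y t) (Y' t))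
          - vfDistSq σx σt L₁ L₂ X X' Y Y'| < ε := by
  intro ε hε
  have hXc : ContinuousOn X (Icc 0 L₁) := fun s hs => (hXderiv s hs).continuousWithinAt
  have hYc : ContinuousOn Y (Icc 0 L₂) := fun t ht => (hYderiv t ht).continuousWithinAt
  -- extensions
  set Xe : ℝ → EuclideanSpace ℝ (Fin n) := IccExtend hL₁.le ((Icc (0:ℝ) L₁).restrict X)
    with hXedef
  set Xe' : ℝ → EuclideanSpace ℝ (Fin n) := IccExtend hL₁.le ((Icc (0:ℝ) L₁).restrict X')
    with hXe'def
  set Ye : ℝ → EuclideanSpace ℝ (Fin n) := IccExtend hL₂.le ((Icc (0:ℝ) L₂).restrict Y)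
    with hYedef
  set Ye' : ℝ → EuclideanSpace ℝ (Fin n) := IccExtend hL₂.le ((Icc (0:ℝ) L₂).restrict Y')
    with hYe'def
  have hXeC : Continuous Xe := hXc.restrict.Icc_extend'
  have hXe'C : Continuous Xe' := hXcont.restrict.Icc_extend'
  have hYeC : Continuous Ye := hYc.restrict.Icc_extend'
  have hYe'C : Continuous Ye' := hYcont.restrict.Icc_extend'
  have hXeEq : EqOn X Xe (Icc 0 L₁) := fun s hs =>
    (IccExtend_of_mem hL₁.le ((Icc (0:ℝ) L₁).restrict X) hs).symm
  have hXe'Eq : EqOn X' Xe' (Icc 0 L₁) := fun s hs =>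
    (IccExtend_of_mem hL₁.le ((Icc (0:ℝ) L₁).restrict X') hs).symm
  have hYeEq : EqOn Y Ye (Icc 0 L₂) := fun t ht =>
    (IccExtend_of_mem hL₂.le ((Icc (0:ℝ) L₂).restrict Y) ht).symm
  have hYe'Eq : EqOn Y' Ye' (Icc 0 L₂) := fun t ht =>
    (IccExtend_of_mem hL₂.le ((Icc (0:ℝ) L₂).restrict Y') ht).symm
  have hXemem : ∀ s, ∃ y ∈ Icc (0:ℝ) L₁, Xe s = X y :=
    fun s => ⟨(projIcc (0:ℝ) L₁ hL₁.le s : ℝ), (projIcc (0:ℝ) L₁ hL₁.le s).2, rfl⟩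
  have hXe'mem : ∀ s, ∃ y ∈ Icc (0:ℝ) L₁, Xe' s = X' y :=
    fun s => ⟨(projIcc (0:ℝ) L₁ hL₁.le s : ℝ), (projIcc (0:ℝ) L₁ hL₁.le s).2, rfl⟩
  have hYemem : ∀ t, ∃ y ∈ Icc (0:ℝ) L₂, Ye t = Y y :=
    fun t => ⟨(projIcc (0:ℝ) L₂ hL₂.le t : ℝ), (projIcc (0:ℝ) L₂ hL₂.le t).2, rfl⟩
  have hYe'mem : ∀ t, ∃ y ∈ Icc (0:ℝ) L₂, Ye' t = Y' y :=
    fun t => ⟨(projIcc (0:ℝ) L₂ hL₂.le t : ℝ), (projIcc (0:ℝ) L₂ hL₂.le t).2, rfl⟩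
  -- bounds
  obtain ⟨MX, hMX0, hMX⟩ : ∃ MX : ℝ, 0 ≤ MX ∧ ∀ s ∈ Icc (0:ℝ) L₁, ‖X s‖ ≤ MX := by
    obtain ⟨sm, hsm, hmax⟩ := isCompact_Icc.exists_isMaxOn (nonempty_Icc.mpr hL₁.le) hXc.norm
    exact ⟨‖X sm‖, norm_nonneg _, fun s hs => isMaxOn_iff.1 hmax s hs⟩
  obtain ⟨MY, hMY0, hMY⟩ : ∃ MY : ℝ, 0 ≤ MY ∧ ∀ t ∈ Icc (0:ℝ) L₂, ‖Y t‖ ≤ MY := by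
    obtain ⟨sm, hsm, hmax⟩ := isCompact_Icc.exists_isMaxOn (nonempty_Icc.mpr hL₂.le) hYc.norm
    exact ⟨‖Y sm‖, norm_nonneg _, fun s hs => isMaxOn_iff.1 hmax s hs⟩
  obtain ⟨CX, hCX0, hCX⟩ : ∃ CX : ℝ, 0 ≤ CX ∧ ∀ s ∈ Icc (0:ℝ) L₁, ‖X' s‖ ≤ CX := by
    obtain ⟨sm, hsm, hmax⟩ := isCompact_Icc.exists_isMaxOn (nonempty_Icc.mpr hL₁.le) hXcont.norm
    exact ⟨‖X' sm‖, norm_nonneg _, fun s hs => isMaxOn_iff.1 hmax s hs⟩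
  obtain ⟨CY, hCY0, hCY⟩ : ∃ CY : ℝ, 0 ≤ CY ∧ ∀ t ∈ Icc (0:ℝ) L₂, ‖Y' t‖ ≤ CY := by
    obtain ⟨sm, hsm, hmax⟩ := isCompact_Icc.exists_isMaxOn (nonempty_Icc.mpr hL₂.le) hYcont.norm
    exact ⟨‖Y' sm‖, norm_nonneg _, fun s hs => isMaxOn_iff.1 hmax s hs⟩
  obtain ⟨mX, hmX0, hmX⟩ : ∃ mX : ℝ, 0 < mX ∧ ∀ s ∈ Icc (0:ℝ) L₁, mX ≤ ‖X' s‖ := by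
    obtain ⟨sm, hsm, hmin⟩ := isCompact_Icc.exists_isMinOn (nonempty_Icc.mpr hL₁.le) hXcont.norm
    exact ⟨‖X' sm‖, hXreg sm hsm, fun s hs => isMinOn_iff.1 hmin s hs⟩
  obtain ⟨mY, hmY0, hmY⟩ : ∃ mY : ℝ, 0 < mY ∧ ∀ t ∈ Icc (0:ℝ) L₂, mY ≤ ‖Y' t‖ := by
    obtain ⟨sm, hsm, hmin⟩ := isCompact_Icc.exists_isMinOn (nonempty_Icc.mpr hL₂.le) hYcont.norm
    exact ⟨‖Y' sm‖, hYreg sm hsm, fun s hs => isMinOn_iff.1 hmin s hs⟩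
  -- transferred bounds
  have hXeB : ∀ s, ‖Xe s‖ ≤ MX := fun s => by
    obtain ⟨y, hy, he⟩ := hXemem s; rw [he]; exact hMX y hy
  have hYeB : ∀ t, ‖Ye t‖ ≤ MY := fun t => by
    obtain ⟨y, hy, he⟩ := hYemem t; rw [he]; exact hMY y hy
  have hXe'B : ∀ s, ‖Xe' s‖ ≤ CX := fun s => by
    obtain ⟨y, hy, he⟩ := hXe'mem s; rw [he]; exact hCX y hy
  have hYe'B : ∀ t, ‖Ye' t‖ ≤ CY := fun t => by
    obtain ⟨y, hy, he⟩ := hYe'mem t; rw [he]; exact hCY y hy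
  have hXe'low : ∀ s, mX ≤ ‖Xe' s‖ := fun s => by
    obtain ⟨y, hy, he⟩ := hXe'mem s; rw [he]; exact hmX y hy
  have hYe'low : ∀ t, mY ≤ ‖Ye' t‖ := fun t => by
    obtain ⟨y, hy, he⟩ := hYe'mem t; rw [he]; exact hmY y hy
  have hXe'ne : ∀ s, Xe' s ≠ 0 := fun s => norm_pos_iff.1 (hmX0.trans_le (hXe'low s))
  have hYe'ne : ∀ t, Ye' t ≠ 0 := fun t => norm_pos_iff.1 (hmY0.trans_le (hYe'low t))
  -- constants
  set m : ℝ := min mX (mY / 2) with hmdef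
  have hm : 0 < m := lt_min hmX0 (by linarith)
  set C : ℝ := CX + 2 * CY + 1 with hCdef
  have hC : 0 < C := by rw [hCdef]; linarith
  set M : ℝ := MX + 2 * MY + 2 with hMdef
  have hM0 : 0 ≤ M := by rw [hMdef]; linarith
  set C₀ : ℝ := (4 * M / σx ^ 2 + 16 / (m * σt ^ 2)) * (C * C) + 2 * C with hC₀def
  have hC₀ : 0 < C₀ := by
    rw [hC₀def]
    have h1 : 0 ≤ 4 * M / σx ^ 2 := div_nonneg (by linarith) (by positivity)
    have h2 : 0 < 16 / (m * σt ^ 2) := div_pos (by norm_num) (mul_pos hm (pow_pos hσt 2))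
    have h3 := mul_nonneg (add_nonneg h1 h2.le) (mul_nonneg hC.le hC.le)
    linarith
  set Cm : ℝ := max 1 CY with hCmdef
  have hCm1 : (1:ℝ) ≤ Cm := le_max_left _ _
  have hCmCY : CY ≤ Cm := le_max_right _ _
  have hCm0 : (0:ℝ) < Cm := lt_of_lt_of_le one_pos hCm1
  set D : ℝ := C₀ * Cm * (2 * L₁ * L₂ + L₂ * L₂) with hDdef
  have hD : 0 < D := by
    rw [hDdef]
    exact mul_pos (mul_pos hC₀ hCm0) (by nlinarith)
  refine ⟨min (1/2) (ε / (D + 1)), lt_min (by norm_num) (div_pos hε (by linarith)),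
    lt_of_le_of_lt (min_le_left _ _) (by norm_num), ?_⟩
  set δ : ℝ := min (1/2) (ε / (D + 1)) with hδdef
  have hδpos : 0 < δ := lt_min (by norm_num) (div_pos hε (by linarith))
  have hδhalf : δ ≤ 1/2 := min_le_left _ _
  have hδε : δ ≤ ε / (D + 1) := min_le_right _ _
  intro φ hφ hφ0 hφ1
  -- perturbed curve
  set Z : ℝ → EuclideanSpace ℝ (Fin n) := fun t => φ (Ye t) with hZdef
  set Z' : ℝ → EuclideanSpace ℝ (Fin n) := fun t => (fderiv ℝ φ (Ye t)) (Ye' t) with hZ'def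
  have hZc : Continuous Z := hφ.continuous.comp hYeC
  have hZ'c : Continuous Z' := ((hφ.continuous_fderiv one_ne_zero).comp hYeC).clm_apply hYe'C
  have hZd : ∀ t, ‖Z t - Ye t‖ ≤ δ := fun t => (hφ0 _).le
  have hZ'dd : ∀ t, ‖Z' t - Ye' t‖ ≤ δ * ‖Ye' t‖ := by
    intro t
    have h := ContinuousLinearMap.le_opNorm
      (fderiv ℝ φ (Ye t) - ContinuousLinearMap.id ℝ (EuclideanSpace ℝ (Fin n))) (Ye' t)
    have he : (fderiv ℝ φ (Ye t) - ContinuousLinearMap.id ℝ (EuclideanSpace ℝ (Fin n))) (Ye' t)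
        = Z' t - Ye' t := by
      simp [hZ'def, ContinuousLinearMap.sub_apply]
    rw [he] at h
    exact h.trans (mul_le_mul_of_nonneg_right (hφ1 _).le (norm_nonneg _))
  have hZ'd : ∀ t, ‖Z' t - Ye' t‖ ≤ δ * CY := fun t =>
    (hZ'dd t).trans (mul_le_mul_of_nonneg_left (hYe'B t) hδpos.le)
  have hZ'low : ∀ t, mY / 2 ≤ ‖Z' t‖ := by
    intro t
    have h1 : ‖Ye' t‖ - ‖Z' t‖ ≤ ‖Z' t - Ye' t‖ := by
      have := norm_sub_norm_le (Ye' t) (Z' t)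
      rw [norm_sub_rev] at this; linarith
    have h2 := hZ'dd t
    have h3 := hYe'low t
    linarith [mul_le_mul_of_nonneg_right hδhalf (norm_nonneg (Ye' t))]
  have hZ'ne : ∀ t, Z' t ≠ 0 := fun t => norm_pos_iff.1 (lt_of_lt_of_le (by linarith) (hZ'low t))
  have hZ'B : ∀ t, ‖Z' t‖ ≤ C := by
    intro t
    have h1 : ‖Z' t‖ - ‖Ye' t‖ ≤ ‖Z' t - Ye' t‖ := by
      have := norm_sub_norm_le (Z' t) (Ye' t); linarith
    have h2 := hZ'd t
    have h3 := hYe'B t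
    have h4 : δ * CY ≤ CY := by nlinarith [hδhalf, hδpos.le, hCY0]
    rw [hCdef]; linarith
  have hZB : ∀ t, ‖Z t‖ ≤ MY + 1 := by
    intro t
    have h1 : ‖Z t‖ - ‖Ye t‖ ≤ ‖Z t - Ye t‖ := by
      have := norm_sub_norm_le (Z t) (Ye t); linarith
    have h2 := hZd t
    have h3 := hYeB t
    have h4 : δ ≤ 1 := by linarith
    linarith
  set d : ℝ := δ * Cm with hddef
  have hd0 : 0 ≤ d := by rw [hddef]; exact mul_nonneg hδpos.le hCm0.le
  have hδd : δ ≤ d := by rw [hddef]; nlinarith [hδpos.le, hCm1]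
  have hδCYd : δ * CY ≤ d := by
    rw [hddef]; exact mul_le_mul_of_nonneg_left hCmCY hδpos.le
  -- cross term kernel bound
  have cross : ∀ s ∈ Icc (0:ℝ) L₁, ∀ t ∈ Icc (0:ℝ) L₂,
      |kerF σx σt (Xe s) (Xe' s) (Ye t) (Ye' t) - kerF σx σt (Xe s) (Xe' s) (Z t) (Z' t)|
        ≤ C₀ * d := by
    intro s hs t ht
    have h := kerF_diff (M := M) (C := C) (m := m) (d := d) hσx hσt hm
      (a := Xe s) (a₂ := Xe s) (u := Xe' s) (u₂ := Xe' s)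
      (p := Ye t) (p₂ := Z t) (v := Ye' t) (v₂ := Z' t)
      (by have := hXeB s; have := hYeB t
          refine (norm_sub_le _ _).trans ?_; rw [hMdef]; linarith)
      (by have := hXeB s; have := hZB t
          refine (norm_sub_le _ _).trans ?_; rw [hMdef]; linarith)
      ((min_le_left _ _).trans (hXe'low s)) ((min_le_right _ _).trans (by linarith [hYe'low t]))
      (hXe'ne s) (hZ'ne t)
      ((hXe'B s).trans (by rw [hCdef]; linarith)) ((hXe'B s).trans (by rw [hCdef]; linarith))
      ((hYe'B t).trans (by rw [hCdef]; linarith)) (hZ'B t)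
      (by simp [hd0]) (by rw [norm_sub_rev]; exact (hZd t).trans hδd)
      (by simp [hd0]) (by rw [norm_sub_rev]; exact (hZ'd t).trans hδCYd)
    calc _ ≤ ((4 * M / σx ^ 2 + 16 / (m * σt ^ 2)) * (C * C) + 2 * C) * d := h
      _ = C₀ * d := by rw [hC₀def]
  -- self term kernel bound
  have self : ∀ t ∈ Icc (0:ℝ) L₂, ∀ t' ∈ Icc (0:ℝ) L₂,
      |kerF σx σt (Ye t) (Ye' t) (Ye t') (Ye' t') - kerF σx σt (Z t) (Z' t) (Z t') (Z' t')|
        ≤ C₀ * d := by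
    intro t ht t' ht'
    have h := kerF_diff (M := M) (C := C) (m := m) (d := d) hσx hσt hm
      (a := Ye t) (a₂ := Z t) (u := Ye' t) (u₂ := Z' t)
      (p := Ye t') (p₂ := Z t') (v := Ye' t') (v₂ := Z' t')
      (by have := hYeB t; have := hYeB t'
          refine (norm_sub_le _ _).trans ?_; rw [hMdef]; linarith)
      (by have := hZB t; have := hZB t'
          refine (norm_sub_le _ _).trans ?_; rw [hMdef]; linarith)
      ((min_le_right _ _).trans (by linarith [hYe'low t]))
      ((min_le_right _ _).trans (by linarith [hYe'low t']))
      (hZ'ne t) (hZ'ne t')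
      ((hYe'B t).trans (by rw [hCdef]; linarith)) (hZ'B t)
      ((hYe'B t').trans (by rw [hCdef]; linarith)) (hZ'B t')
      (by rw [norm_sub_rev]; exact (hZd t).trans hδd)
      (by rw [norm_sub_rev]; exact (hZd t').trans hδd)
      (by rw [norm_sub_rev]; exact (hZ'd t).trans hδCYd)
      (by rw [norm_sub_rev]; exact (hZ'd t').trans hδCYd)
    calc _ ≤ ((4 * M / σx ^ 2 + 16 / (m * σt ^ 2)) * (C * C) + 2 * C) * d := h
      _ = C₀ * d := by rw [hC₀def]
  -- congruence to extensions
  have hZEq : EqOn (fun t => φ (Y t)) Z (Icc 0 L₂) := fun t ht => by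
    simp only [hZdef]; rw [hYeEq ht]
  have hZ'Eq : EqOn (fun t => fderiv ℝ φ (Y t) (Y' t)) Z' (Icc 0 L₂) := fun t ht => by
    simp only [hZ'def]; rw [hYeEq ht, hYe'Eq ht]
  have e1 : vfInnerR σx σt L₁ L₂ X X' (fun t => φ (Y t)) (fun t => fderiv ℝ φ (Y t) (Y' t))
      = vfInnerR σx σt L₁ L₂ Xe Xe' Z Z' :=
    vfInnerR_congr hL₁.le hL₂.le hXeEq hXe'Eq hZEq hZ'Eq
  have e2 : vfInnerR σx σt L₁ L₂ X X' Y Y' = vfInnerR σx σt L₁ L₂ Xe Xe' Ye Ye' :=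
    vfInnerR_congr hL₁.le hL₂.le hXeEq hXe'Eq hYeEq hYe'Eq
  have e3 : vfInnerR σx σt L₂ L₂ (fun t => φ (Y t)) (fun t => fderiv ℝ φ (Y t) (Y' t))
        (fun t => φ (Y t)) (fun t => fderiv ℝ φ (Y t) (Y' t))
      = vfInnerR σx σt L₂ L₂ Z Z' Z Z' :=
    vfInnerR_congr hL₂.le hL₂.le hZEq hZ'Eq hZEq hZ'Eq
  have e4 : vfInnerR σx σt L₂ L₂ Y Y' Y Y' = vfInnerR σx σt L₂ L₂ Ye Ye' Ye Ye' :=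
    vfInnerR_congr hL₂.le hL₂.le hYeEq hYe'Eq hYeEq hYe'Eq
  -- integral bounds
  have b1 : |vfInnerR σx σt L₁ L₂ Xe Xe' Ye Ye' - vfInnerR σx σt L₁ L₂ Xe Xe' Z Z'|
      ≤ C₀ * d * L₂ * L₁ :=
    vfInnerR_diff_le hL₁.le hL₂.le (mul_nonneg hC₀.le hd0) hXeC hXe'C hYeC hYe'C hXeC hXe'C hZc hZ'c
      hXe'ne hYe'ne hXe'ne hZ'ne cross
  have b2 : |vfInnerR σx σt L₂ L₂ Ye Ye' Ye Ye' - vfInnerR σx σt L₂ L₂ Z Z' Z Z'|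
      ≤ C₀ * d * L₂ * L₂ :=
    vfInnerR_diff_le hL₂.le hL₂.le (mul_nonneg hC₀.le hd0) hYeC hYe'C hYeC hYe'C hZc hZ'c hZc hZ'c
      hYe'ne hYe'ne hZ'ne hZ'ne self
  -- assemble
  have key : vfDistSq σx σt L₁ L₂ X X' (fun t => φ (Y t)) (fun t => fderiv ℝ φ (Y t) (Y' t))
      - vfDistSq σx σt L₁ L₂ X X' Y Y'
      = (-2) * (vfInnerR σx σt L₁ L₂ Xe Xe' Z Z' - vfInnerR σx σt L₁ L₂ Xe Xe' Ye Ye')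
        + (vfInnerR σx σt L₂ L₂ Z Z' Z Z' - vfInnerR σx σt L₂ L₂ Ye Ye' Ye Ye') := by
    unfold vfDistSq
    rw [e1, e2, e3, e4]; ring
  rw [key]
  have habs : |(-2) * (vfInnerR σx σt L₁ L₂ Xe Xe' Z Z' - vfInnerR σx σt L₁ L₂ Xe Xe' Ye Ye')
        + (vfInnerR σx σt L₂ L₂ Z Z' Z Z' - vfInnerR σx σt L₂ L₂ Ye Ye' Ye Ye')|
      ≤ 2 * (C₀ * d * L₂ * L₁) + C₀ * d * L₂ * L₂ := by
    refine (abs_add_le _ _).trans ?_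
    rw [abs_mul, abs_sub_comm (vfInnerR σx σt L₁ L₂ Xe Xe' Z Z') _,
      abs_sub_comm (vfInnerR σx σt L₂ L₂ Z Z' Z Z') _]
    have : |(-2 : ℝ)| = 2 := by norm_num
    rw [this]
    nlinarith [b1, b2]
  refine lt_of_le_of_lt habs ?_
  have hfin : 2 * (C₀ * d * L₂ * L₁) + C₀ * d * L₂ * L₂ = δ * D := by
    rw [hDdef, hddef]; ring
  rw [hfin]
  have h1 : δ * D ≤ ε / (D + 1) * D := mul_le_mul_of_nonneg_right hδε hD.le
  have h2 : ε / (D + 1) * D < ε := by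
    rw [div_mul_eq_mul_div, div_lt_iff₀ (by linarith)]
    nlinarith
  linarith
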